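/- Let P be a preference profile over a finite candidate set C (|C| ≥ 2) with an odd number n of voters, and let S ⊆ C be a minimum-cardinality set such that M_{x,y} > 0 for all x ∈ S and y ∈ C ∖ S (a Smith set of P). Assume |S| ≤ 3. Let f be a voting rule, defined on P and on every profile P_{-z} obtained from P by deleting one candidate, such that: (i) f is resolute on these profiles (f always returns a singleton); (ii) f satisfies the Smith criterion on these profiles (the winner always belongs to a minimum-cardinality Smith set of the profile at hand); and (iii) f is independent of Smith-dominated alternatives: for every z ∈ C ∖ S, f(P_{-z}) = f(P). Then for every pair of distinct candidates {x,y} ⊆ C there exists z ∈ {x,y} such that, setting P' = P_{-z}: (1) for all u ∉ {x,y}, u ∈ f(P) iff u ∈ f(P'); and (2) f(P) ∩ {x,y} ≠ ∅ iff f(P') ∩ {x,y} ≠ ∅. In particular, f is weakly independent of α-deletion clones and of β-swap clones for all α ≥ 0 and β ≥ 0 on such profiles. -/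

import Mathlib

open Finset

/-- A ranking (strict total order) of the candidate set `D`, encoded as a
duplicate-free list (best candidate first) whose set of elements is exactly `D`. -/
def Ranking {C : Type*} [DecidableEq C] (D : Finset C) : Type _ :=
  {l : List C // l.Nodup ∧ l.toFinset = D}

/-- The (0-indexed) position of candidate `x` in ranking `r`. -/
def rpos {C : Type*} [DecidableEq C] {D : Finset C} (r : Ranking D) (x : C) : ℕ :=
  r.val.idxOf x

/-- Delete candidate `x` from a ranking. -/
def eraseCand {C : Type*} [DecidableEq C] {D : Finset C} (x : C) (r : Ranking D) :
    Ranking (D.erase x) :=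
  ⟨r.val.erase x, r.2.1.erase x, by
    ext c
    simp [List.Nodup.mem_erase_iff r.2.1, Finset.mem_erase, ← r.2.2]⟩

/-- The pairwise margin `M_{x,y}` of `x` over `y` in a profile. -/
def margin {C : Type*} [DecidableEq C] {D : Finset C} {n : ℕ}
    (P : Fin n → Ranking D) (x y : C) : ℤ :=
  ((univ.filter fun i => rpos (P i) x < rpos (P i) y).card : ℤ) -
    ((univ.filter fun i => rpos (P i) y < rpos (P i) x).card : ℤ)

/-- `S` dominates the rest of the candidate set `D`: every member of `S` has strictly
positive margin against every candidate of `D` outside `S`. -/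
def Dominating {C : Type*} [DecidableEq C] {D : Finset C} {n : ℕ}
    (P : Fin n → Ranking D) (S : Finset C) : Prop :=
  S.Nonempty ∧ S ⊆ D ∧ ∀ x ∈ S, ∀ y ∈ D, y ∉ S → 0 < margin P x y

/-- `S` is a Smith set of the profile `P` over `D`: a dominating set of minimum cardinality. -/
def IsSmithSet {C : Type*} [DecidableEq C] {D : Finset C} {n : ℕ}
    (P : Fin n → Ranking D) (S : Finset C) : Prop :=
  Dominating P S ∧ ∀ T : Finset C, Dominating P T → S.card ≤ T.card

lemma indexOf_erase_lt_iff {C : Type*} [DecidableEq C] (l : List C) {x y z : C}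
    (hx : x ≠ z) (hy : y ≠ z) :
    List.idxOf x (l.erase z) < List.idxOf y (l.erase z) ↔
      List.idxOf x l < List.idxOf y l := by
  induction l with
  | nil => simp
  | cons a t ih =>
    rcases eq_or_ne a z with rfl | haz
    · rw [List.erase_cons_head,
        List.idxOf_cons_ne _ (Ne.symm hx), List.idxOf_cons_ne _ (Ne.symm hy)]
      omega
    · rw [List.erase_cons_tail (a := z) (b := a) (by simpa using fun h => haz h)]
      rcases eq_or_ne x a with rfl | hxa
      · rw [List.idxOf_cons_self, List.idxOf_cons_self]
        rcases eq_or_ne y x with rfl | hyx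
        · simp
        · rw [List.idxOf_cons_ne _ (Ne.symm hyx), List.idxOf_cons_ne _ (Ne.symm hyx)]
          omega
      · rw [List.idxOf_cons_ne _ (Ne.symm hxa), List.idxOf_cons_ne _ (Ne.symm hxa)]
        rcases eq_or_ne y a with rfl | hya
        · rw [List.idxOf_cons_self, List.idxOf_cons_self]; omega
        · rw [List.idxOf_cons_ne _ (Ne.symm hya), List.idxOf_cons_ne _ (Ne.symm hya)]
          exact ⟨fun h => Nat.succ_lt_succ (ih.mp (Nat.lt_of_succ_lt_succ h)),
            fun h => Nat.succ_lt_succ (ih.mpr (Nat.lt_of_succ_lt_succ h))⟩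

lemma margin_erase {C : Type*} [DecidableEq C] {D : Finset C} {n : ℕ}
    (P : Fin n → Ranking D) {x y : C} (z : C) (hx : x ≠ z) (hy : y ≠ z) :
    margin (fun i => eraseCand z (P i)) x y = margin P x y := by
  have h1 : (univ.filter fun i => rpos (eraseCand z (P i)) x < rpos (eraseCand z (P i)) y)
      = univ.filter fun i => rpos (P i) x < rpos (P i) y :=
    Finset.filter_congr fun i _ => indexOf_erase_lt_iff _ hx hy
  have h2 : (univ.filter fun i => rpos (eraseCand z (P i)) y < rpos (eraseCand z (P i)) x)
      = univ.filter fun i => rpos (P i) y < rpos (P i) x :=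
    Finset.filter_congr fun i _ => indexOf_erase_lt_iff _ hy hx
  unfold margin
  rw [show (fun i => eraseCand z (P i)) = fun i => eraseCand z (P i) from rfl]
  rw [h1, h2]

lemma margin_neg {C : Type*} [DecidableEq C] {D : Finset C} {n : ℕ}
    (P : Fin n → Ranking D) (x y : C) : margin P y x = - margin P x y := by
  unfold margin; ring

lemma margin_total {C : Type*} [DecidableEq C] {D : Finset C} {n : ℕ} (hodd : Odd n)
    (P : Fin n → Ranking D) {x y : C} (hx : x ∈ D) (hy : y ∈ D) (hxy : x ≠ y) :
    0 < margin P x y ∨ 0 < margin P y x := by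
  have key : ∀ i : Fin n, (rpos (P i) y < rpos (P i) x) ↔ ¬ (rpos (P i) x < rpos (P i) y) := by
    intro i
    have hx' : x ∈ (P i).val := by rw [← List.mem_toFinset, (P i).2.2]; exact hx
    have hy' : y ∈ (P i).val := by rw [← List.mem_toFinset, (P i).2.2]; exact hy
    have : rpos (P i) x ≠ rpos (P i) y := fun h => hxy ((List.idxOf_inj hx').mp h)
    unfold rpos at *; omega
  have hsum : (univ.filter fun i => rpos (P i) x < rpos (P i) y).card
      + (univ.filter fun i => rpos (P i) y < rpos (P i) x).card = n := by
    rw [Finset.filter_congr (fun i _ => key i)]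
    simpa using Finset.card_filter_add_card_filter_not
      (s := (univ : Finset (Fin n))) (fun i => rpos (P i) x < rpos (P i) y)
  unfold margin
  obtain ⟨k, hk⟩ := hodd
  omega

lemma dominating_chain {C : Type*} [DecidableEq C] {D : Finset C} {n : ℕ}
    {P : Fin n → Ranking D} {A B : Finset C} (hA : Dominating P A) (hB : Dominating P B) :
    A ⊆ B ∨ B ⊆ A := by
  by_contra h
  push_neg at h
  obtain ⟨a, ha, haB⟩ := not_subset.mp h.1
  obtain ⟨b, hb, hbA⟩ := not_subset.mp h.2
  have h1 := hA.2.2 a ha b (hB.2.1 hb) hbA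
  have h2 := hB.2.2 b hb a (hA.2.1 ha) haB
  rw [margin_neg] at h2
  omega

lemma erased_winner {C : Type*} [Fintype C] [DecidableEq C] {n : ℕ}
    (P : Fin n → Ranking (univ : Finset C))
    (f : (D : Finset C) → (Fin n → Ranking D) → Finset C)
    {z a : C} (haz : a ≠ z)
    (hres' : (f (univ.erase z) (fun i => eraseCand z (P i))).card = 1)
    (hsc' : ∀ w ∈ f (univ.erase z) (fun i => eraseCand z (P i)),
      ∃ S' : Finset C, IsSmithSet (fun i => eraseCand z (P i)) S' ∧ w ∈ S')
    (hbeat : ∀ b : C, b ≠ z → b ≠ a → 0 < margin P a b) :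
    f (univ.erase z) (fun i => eraseCand z (P i)) = {a} := by
  have hA : Dominating (fun i => eraseCand z (P i)) ({a} : Finset C) := by
    refine ⟨singleton_nonempty a, by simp [haz], ?_⟩
    intro u hu b hb hbu
    simp only [mem_singleton] at hu hbu
    subst hu
    rw [mem_erase] at hb
    rw [margin_erase P z haz hb.1]
    exact hbeat b hb.1 hbu
  obtain ⟨w, hw⟩ := card_eq_one.mp hres'
  obtain ⟨S', hS', hwS'⟩ := hsc' w (by rw [hw]; exact mem_singleton_self w)
  have hcard : S'.card ≤ 1 := by simpa using hS'.2 _ hA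
  have hS'eq : S' = {w} := by
    have : ({w} : Finset C) ⊆ S' := singleton_subset_iff.mpr hwS'
    exact (eq_of_subset_of_card_le this hcard).symm
  rw [hS'eq] at hS'
  rcases dominating_chain hS'.1 hA with h | h
  · rw [hw, mem_singleton.mp (h (mem_singleton_self w))]
  · rw [hw, mem_singleton.mp (h (mem_singleton_self a))]
/-- **Smith-based rules are weakly independent of approximate clones when the Smith set has
size at most 3 (odd number of voters).**
Let `P` be a profile over a finite candidate set `C` (`|C| ≥ 2`) with an odd number `n` of
voters, and `S` a Smith set of `P` with `|S| ≤ 3`. Let `f` be a voting rule (defined on `P`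
and on every one-candidate-deleted profile `P₋z`) that (i) is resolute on these profiles,
(ii) satisfies the Smith criterion on these profiles, and (iii) is independent of
Smith-dominated alternatives: `f(P₋z) = f(P)` for every `z ∉ S`. Then for every pair of
distinct candidates `{x,y}` there is a `z ∈ {x,y}` such that, letting `P' = P₋z`,
(1) for all `u ∉ {x,y}`, `u ∈ f(P) ↔ u ∈ f(P')`, and
(2) `f(P) ∩ {x,y} ≠ ∅ ↔ f(P') ∩ {x,y} ≠ ∅`. In particular `f` is weakly independent of
`α`-deletion clones and `β`-swap clones on such profiles. -/
theorem smith_rule_weakly_indep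
    (C : Type*) [Fintype C] [DecidableEq C] (hC : 2 ≤ Fintype.card C)
    (n : ℕ) (hodd : Odd n) (P : Fin n → Ranking (univ : Finset C))
    (S : Finset C) (hSmith : IsSmithSet P S) (hS3 : S.card ≤ 3)
    (f : (D : Finset C) → (Fin n → Ranking D) → Finset C)
    -- (i) resoluteness on the profiles at hand
    (hres : (f univ P).card = 1)
    (hres' : ∀ z : C, (f (univ.erase z) (fun i => eraseCand z (P i))).card = 1)
    -- (ii) Smith criterion on the profiles at hand
    (hsc : ∀ w ∈ f univ P, ∃ S' : Finset C, IsSmithSet P S' ∧ w ∈ S')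
    (hsc' : ∀ z : C, ∀ w ∈ f (univ.erase z) (fun i => eraseCand z (P i)),
      ∃ S' : Finset C, IsSmithSet (fun i => eraseCand z (P i)) S' ∧ w ∈ S')
    -- (iii) independence of Smith-dominated alternatives
    (hisda : ∀ z : C, z ∉ S → f (univ.erase z) (fun i => eraseCand z (P i)) = f univ P) :
    ∀ x y : C, x ≠ y → ∃ z : C, (z = x ∨ z = y) ∧
      (∀ u : C, u ≠ x → u ≠ y →
        (u ∈ f univ P ↔ u ∈ f (univ.erase z) (fun i => eraseCand z (P i)))) ∧
      ((f univ P ∩ {x, y}).Nonempty ↔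
        (f (univ.erase z) (fun i => eraseCand z (P i)) ∩ {x, y}).Nonempty) := by
  intro x y hxy
  by_cases hx : x ∈ S
  swap
  · exact ⟨x, Or.inl rfl, fun u _ _ => by rw [hisda x hx], by rw [hisda x hx]⟩
  by_cases hy : y ∈ S
  swap
  · exact ⟨y, Or.inr rfl, fun u _ _ => by rw [hisda y hy], by rw [hisda y hy]⟩
  obtain ⟨hdom, hmin⟩ := hSmith
  have hcard2 : 2 ≤ S.card := one_lt_card.mpr ⟨x, hx, y, hy, hxy⟩
  have nosingle : ∀ a ∈ S, ¬ ∀ b ∈ S, b ≠ a → 0 < margin P a b := by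
    intro a ha hall
    have hda : Dominating P ({a} : Finset C) := by
      refine ⟨singleton_nonempty a, by simp, ?_⟩
      intro u hu b _ hbu
      simp only [mem_singleton] at hu hbu
      subst hu
      by_cases hbS : b ∈ S
      · exact hall b hbS hbu
      · exact hdom.2.2 u ha b (mem_univ b) hbS
    have := hmin _ hda
    simp only [card_singleton] at this
    omega
  have total : ∀ {a b : C}, a ≠ b → 0 < margin P a b ∨ 0 < margin P b a :=
    fun hab => margin_total hodd P (mem_univ _) (mem_univ _) hab
  have hcard3 : S.card = 3 := by
    rcases Nat.lt_or_ge S.card 3 with h | h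
    · exfalso
      have hSeq : S = {x, y} := by
        refine (eq_of_subset_of_card_le ?_ ?_).symm
        · intro u hu
          rw [mem_insert, mem_singleton] at hu
          rcases hu with rfl | rfl <;> assumption
        · rw [card_pair hxy]; omega
      have memS : ∀ b ∈ S, b = x ∨ b = y := by
        intro b hb; rw [hSeq, mem_insert, mem_singleton] at hb; exact hb
      rcases total hxy with h' | h'
      · refine nosingle x hx ?_
        intro b hb hbx
        rcases memS b hb with rfl | rfl
        · exact absurd rfl hbx
        · exact h'
      · refine nosingle y hy ?_
        intro b hb hby
        rcases memS b hb with rfl | rfl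
        · exact h'
        · exact absurd rfl hby
    · omega
  have hcex : ∃ c ∈ S, c ≠ x ∧ c ≠ y := by
    by_contra h
    push_neg at h
    have hsub : S ⊆ {x, y} := by
      intro u hu
      rw [mem_insert, mem_singleton]
      by_contra hu'
      push_neg at hu'
      exact hu'.2 (h u hu hu'.1)
    have := card_le_card hsub
    rw [card_pair hxy] at this
    omega
  obtain ⟨c, hcS, hcx, hcy⟩ := hcex
  have memS : ∀ b ∈ S, b = x ∨ b = y ∨ b = c := by
    have hsub : ({x, y, c} : Finset C) ⊆ S := by
      intro u hu
      rw [mem_insert, mem_insert, mem_singleton] at hu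
      rcases hu with rfl | rfl | rfl <;> assumption
    have h3 : ({x, y, c} : Finset C).card = 3 := by
      rw [card_insert_of_notMem (by simp [hxy, Ne.symm hcx]), card_pair (Ne.symm hcy)]
    have hSeq : S = {x, y, c} := (eq_of_subset_of_card_le hsub (by omega)).symm
    intro b hb
    rw [hSeq, mem_insert, mem_insert, mem_singleton] at hb
    exact hb
  obtain ⟨w, hw⟩ := card_eq_one.mp hres
  obtain ⟨S', hS'smith, hwS'⟩ := hsc w (by rw [hw]; exact mem_singleton_self w)
  have hS'S : S' = S := by
    rcases dominating_chain hS'smith.1 hdom with h | h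
    · exact eq_of_subset_of_card_le h (hmin S' hS'smith.1)
    · exact (eq_of_subset_of_card_le h (hS'smith.2 S hdom)).symm
  have hwS : w = x ∨ w = y ∨ w = c := memS w (hS'S ▸ hwS')
  rcases total hxy with hxy' | hyx'
  · -- x beats y; cycle x → y → c → x
    have hcx' : 0 < margin P c x := by
      rcases total hcx with h | h
      · exact h
      · exfalso
        refine nosingle x hx ?_
        intro b hb hbx
        rcases memS b hb with rfl | rfl | rfl
        · exact absurd rfl hbx
        · exact hxy'
        · exact h
    have hyc' : 0 < margin P y c := by
      rcases total (Ne.symm hcy) with h | h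
      · exact h
      · exfalso
        refine nosingle c hcS ?_
        intro b hb hbc
        rcases memS b hb with rfl | rfl | rfl
        · exact hcx'
        · exact h
        · exact absurd rfl hbc
    by_cases hwc : w = c
    · have hfy : f (univ.erase y) (fun i => eraseCand y (P i)) = {c} := by
        refine erased_winner P f hcy (hres' y) (hsc' y) ?_
        intro b hby hbc
        by_cases hbS : b ∈ S
        · rcases memS b hbS with rfl | rfl | rfl
          · exact hcx'
          · exact absurd rfl hby
          · exact absurd rfl hbc
        · exact hdom.2.2 c hcS b (mem_univ b) hbS
      exact ⟨y, Or.inr rfl, fun u _ _ => by rw [hw, hfy, hwc], by rw [hw, hfy, hwc]⟩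
    · have hwxy : w = x ∨ w = y := by rcases hwS with h | h | h <;> tauto
      have hfx : f (univ.erase x) (fun i => eraseCand x (P i)) = {y} := by
        refine erased_winner P f (Ne.symm hxy) (hres' x) (hsc' x) ?_
        intro b hbx hby
        by_cases hbS : b ∈ S
        · rcases memS b hbS with rfl | rfl | rfl
          · exact absurd rfl hbx
          · exact absurd rfl hby
          · exact hyc'
        · exact hdom.2.2 y hy b (mem_univ b) hbS
      refine ⟨x, Or.inl rfl, ?_, ?_⟩
      · intro u hux huy
        rw [hw, hfx]
        simp only [mem_singleton]
        constructor <;> intro h <;> exfalso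
        · rcases hwxy with rfl | rfl
          · exact hux h
          · exact huy h
        · exact huy h
      · rw [hw, hfx]
        constructor <;> intro _
        · exact ⟨y, by simp⟩
        · refine ⟨w, mem_inter.mpr ⟨mem_singleton_self w, ?_⟩⟩
          rcases hwxy with rfl | rfl <;> simp
  · -- y beats x; cycle y → x → c → y
    have hcy' : 0 < margin P c y := by
      rcases total hcy with h | h
      · exact h
      · exfalso
        refine nosingle y hy ?_
        intro b hb hby
        rcases memS b hb with rfl | rfl | rfl
        · exact hyx'
        · exact absurd rfl hby
        · exact h
    have hxc' : 0 < margin P x c := by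
      rcases total (Ne.symm hcx) with h | h
      · exact h
      · exfalso
        refine nosingle c hcS ?_
        intro b hb hbc
        rcases memS b hb with rfl | rfl | rfl
        · exact h
        · exact hcy'
        · exact absurd rfl hbc
    by_cases hwc : w = c
    · have hfx : f (univ.erase x) (fun i => eraseCand x (P i)) = {c} := by
        refine erased_winner P f hcx (hres' x) (hsc' x) ?_
        intro b hbx hbc
        by_cases hbS : b ∈ S
        · rcases memS b hbS with rfl | rfl | rfl
          · exact absurd rfl hbx
          · exact hcy'
          · exact absurd rfl hbc
        · exact hdom.2.2 c hcS b (mem_univ b) hbS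
      exact ⟨x, Or.inl rfl, fun u _ _ => by rw [hw, hfx, hwc], by rw [hw, hfx, hwc]⟩
    · have hwxy : w = x ∨ w = y := by rcases hwS with h | h | h <;> tauto
      have hfy : f (univ.erase y) (fun i => eraseCand y (P i)) = {x} := by
        refine erased_winner P f hxy (hres' y) (hsc' y) ?_
        intro b hby hbx
        by_cases hbS : b ∈ S
        · rcases memS b hbS with rfl | rfl | rfl
          · exact absurd rfl hbx
          · exact absurd rfl hby
          · exact hxc'
        · exact hdom.2.2 x hx b (mem_univ b) hbS
      refine ⟨y, Or.inr rfl, ?_, ?_⟩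
      · intro u hux huy
        rw [hw, hfy]
        simp only [mem_singleton]
        constructor <;> intro h <;> exfalso
        · rcases hwxy with rfl | rfl
          · exact hux h
          · exact huy h
        · exact hux h
      · rw [hw, hfy]
        constructor <;> intro _
        · exact ⟨x, by simp⟩
        · refine ⟨w, mem_inter.mpr ⟨mem_singleton_self w, ?_⟩⟩
          rcases hwxy with rfl | rfl <;> simp
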